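/- Let q be a Lie algebra over a field k of characteristic zero, f a Lie subalgebra of q, and V a vector subspace with q = f ⊕ V as vector spaces. Define a bracket on f ⊕ V by [ξ,η]' = [ξ,η] for ξ,η ∈ f, [ξ,v]' = pr_V([ξ,v]) for ξ ∈ f, v ∈ V (where pr_V is the projection onto V along f), and [v,w]' = 0 for v,w ∈ V. Then (f ⊕ V, [·,·]') is a Lie algebra. -/

import Mathlib

/-!
STATEMENT 0: Let `q` be a Lie algebra over a field `k` of characteristic zero, `f` a Lie
subalgebra of `q` and `V` a vector subspace with `q = f ⊕ V`.  The Inönü–Wigner contracted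
bracket on `f ⊕ V` (here realized as `↥f × ↥V`) defined by
`[ξ,η]' = [ξ,η]`, `[ξ,v]' = pr_V [ξ,v]`, `[v,w]' = 0`
turns `f ⊕ V` into a Lie algebra (it is bilinear, alternating and satisfies the
Jacobi/Leibniz identity).
-/

variable {k : Type*} [Field k] [CharZero k]
variable {q : Type*} [LieRing q] [LieAlgebra k q]

/-- The projection of `q` onto `V` along `f`. -/
noncomputable def prV (f : LieSubalgebra k q) (V : Submodule k q)
    (h : IsCompl f.toSubmodule V) : q →ₗ[k] ↥V :=
  V.linearProjOfIsCompl f.toSubmodule h.symm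

/-- The contracted bracket on `f ⊕ V ≅ ↥f × ↥V`:
`[(ξ,v), (η,w)]' = ([ξ,η], pr_V [ξ,w] - pr_V [η,v])`, so that in particular
`[ξ,η]' = [ξ,η]`, `[ξ,v]' = pr_V [ξ,v]` and `[v,w]' = 0`. -/
noncomputable def contrBracket (f : LieSubalgebra k q) (V : Submodule k q)
    (h : IsCompl f.toSubmodule V) (x y : ↥f × ↥V) : ↥f × ↥V :=
  (⁅x.1, y.1⁆, prV f V h ⁅(x.1 : q), (y.2 : q)⁆ - prV f V h ⁅(y.1 : q), (x.2 : q)⁆)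

lemma prV_apply_mem_f (f : LieSubalgebra k q) (V : Submodule k q)
    (h : IsCompl f.toSubmodule V) {x : q} (hx : x ∈ f) : prV f V h x = 0 := by
  exact Submodule.linearProjOfIsCompl_apply_right h.symm ⟨x, hx⟩

lemma prV_lie_prV (f : LieSubalgebra k q) (V : Submodule k q)
    (h : IsCompl f.toSubmodule V) (ξ : ↥f) (u : q) :
    prV f V h ⁅(ξ : q), (prV f V h u : q)⁆ = prV f V h ⁅(ξ : q), u⁆ := by
  have hd : ((f.toSubmodule.linearProjOfIsCompl V h u : q)) + (prV f V h u : q) = u :=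
    Submodule.projection_add_projection_eq_self h u
  have hmem : ⁅(ξ : q), ((f.toSubmodule.linearProjOfIsCompl V h u : q))⁆ ∈ f :=
    f.lie_mem ξ.2 (f.toSubmodule.linearProjOfIsCompl V h u).2
  calc prV f V h ⁅(ξ : q), (prV f V h u : q)⁆
      = prV f V h ⁅(ξ : q), ((f.toSubmodule.linearProjOfIsCompl V h u : q))⁆
        + prV f V h ⁅(ξ : q), (prV f V h u : q)⁆ := by
        rw [prV_apply_mem_f f V h hmem, zero_add]
    _ = prV f V h ⁅(ξ : q), u⁆ := by rw [← map_add, ← lie_add, hd]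

/-- The Inönü–Wigner contraction `f ⋉ Vᵃ` is a Lie algebra. -/
theorem contraction_isLieAlgebra (f : LieSubalgebra k q) (V : Submodule k q)
    (h : IsCompl f.toSubmodule V) :
    (∀ x y z : ↥f × ↥V,
        contrBracket f V h (x + y) z = contrBracket f V h x z + contrBracket f V h y z) ∧
    (∀ x y z : ↥f × ↥V,
        contrBracket f V h x (y + z) = contrBracket f V h x y + contrBracket f V h x z) ∧
    (∀ (c : k) (x y : ↥f × ↥V),
        contrBracket f V h (c • x) y = c • contrBracket f V h x y) ∧
    (∀ (c : k) (x y : ↥f × ↥V),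
        contrBracket f V h x (c • y) = c • contrBracket f V h x y) ∧
    (∀ x : ↥f × ↥V, contrBracket f V h x x = 0) ∧
    (∀ x y z : ↥f × ↥V,
        contrBracket f V h x (contrBracket f V h y z) =
          contrBracket f V h (contrBracket f V h x y) z +
            contrBracket f V h y (contrBracket f V h x z)) := by
  refine ⟨?_, ?_, ?_, ?_, ?_, ?_⟩
  · intro x y z
    simp [contrBracket, Prod.ext_iff, add_lie, lie_add]
    abel
  · intro x y z
    simp [contrBracket, Prod.ext_iff, add_lie, lie_add]
    abel
  · intro c x y
    simp [contrBracket, Prod.ext_iff, smul_lie, lie_smul, smul_sub, SetLike.val_smul]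
  · intro c x y
    simp [contrBracket, Prod.ext_iff, smul_lie, lie_smul, smul_sub, SetLike.val_smul]
  · intro x
    simp [contrBracket, Prod.ext_iff]
  · intro x y z
    obtain ⟨x1, x2⟩ := x; obtain ⟨y1, y2⟩ := y; obtain ⟨z1, z2⟩ := z
    simp only [contrBracket, Prod.mk_add_mk, Prod.mk.injEq, LieSubalgebra.coe_bracket,
      Submodule.coe_sub, lie_sub, sub_lie, map_sub, prV_lie_prV]
    refine ⟨leibniz_lie x1 y1 z1, ?_⟩
    simp only [lie_lie, map_sub]
    abel
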